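/- arXiv:1308.3078 — 2 statements merged into one kernel-verified Lean document; each statement's English description precedes it below -/
import Mathlib

section
/- Let A be a commutative ring and M a finitely presented A-module. Then the canonical morphism M ⊗_A A[[t]] → M[[t]] is an isomorphism. -/
open TensorProduct

/-- For a commutative ring `A` and an `A`-module `M`, the canonical `A`-linear map
`M ⊗[A] A[[t]] → M[[t]]`, where `M[[t]]` is realized as the module `ℕ → M` of
coefficient sequences; `m ⊗ f` is sent to the series whose `n`-th coefficient is
`(coeff n f) • m`. -/
noncomputable def powerSeriesTensorMap (A M : Type*) [CommRing A] [AddCommGroup M]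
    [Module A M] : M ⊗[A] PowerSeries A →ₗ[A] (ℕ → M) :=
  TensorProduct.lift <| LinearMap.mk₂ A (fun m f n => (PowerSeries.coeff (R := A) n f) • m)
    (fun m₁ m₂ f => by funext n; exact smul_add _ _ _)
    (fun c m f => by funext n; exact smul_comm _ _ _)
    (fun m f g => by funext n; simp only [map_add, add_smul]; rfl)
    (fun c m f => by funext n; simp only [map_smul, smul_eq_mul, mul_smul]; rfl)

@[simp]
lemma powerSeriesTensorMap_tmul (A M : Type*) [CommRing A] [AddCommGroup M]
    [Module A M] (m : M) (f : PowerSeries A) :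
    powerSeriesTensorMap A M (m ⊗ₜ f) = fun n => (PowerSeries.coeff (R := A) n f) • m := rfl

lemma powerSeriesTensorMap_naturality {A M N : Type*} [CommRing A] [AddCommGroup M]
    [Module A M] [AddCommGroup N] [Module A N] (l : M →ₗ[A] N)
    (x : M ⊗[A] PowerSeries A) :
    powerSeriesTensorMap A N (l.rTensor (PowerSeries A) x) =
      fun n => l (powerSeriesTensorMap A M x n) := by
  induction x with
  | zero => funext n; simp
  | tmul m f => funext n; simp [map_smul]
  | add x y hx hy => funext n; simp only [map_add, Pi.add_apply, hx, hy]

/-- The coefficient linear equivalence `A[[t]] ≃ₗ[A] (ℕ → A)`. -/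
noncomputable def psCoeffEquiv (A : Type*) [CommRing A] : PowerSeries A ≃ₗ[A] (ℕ → A) where
  toFun f n := PowerSeries.coeff (R := A) n f
  map_add' f g := by funext n; simp
  map_smul' c f := by funext n; simp
  invFun := PowerSeries.mk
  left_inv f := by ext n; simp
  right_inv F := by funext n; simp

/-- Swapping the two arguments of a doubly-indexed family of scalars. -/
def swapLinearEquiv (A κ : Type*) [CommRing A] : (κ → ℕ → A) ≃ₗ[A] (ℕ → κ → A) where
  toFun := Function.swap
  invFun := Function.swap
  map_add' _ _ := rfl
  map_smul' _ _ := rfl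
  left_inv _ := rfl
  right_inv _ := rfl

lemma powerSeriesTensorMap_bijective_free (A : Type*) [CommRing A] (k : ℕ) :
    Function.Bijective (powerSeriesTensorMap A (Fin k → A)) := by
  let e : (Fin k → A) ⊗[A] PowerSeries A ≃ₗ[A] (ℕ → Fin k → A) :=
    (TensorProduct.comm A _ _) ≪≫ₗ
      (TensorProduct.piScalarRight A A (PowerSeries A) (Fin k)) ≪≫ₗ
      (LinearEquiv.piCongrRight fun _ => psCoeffEquiv A) ≪≫ₗ swapLinearEquiv A (Fin k)
  have he : powerSeriesTensorMap A (Fin k → A) = e.toLinearMap := by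
    apply TensorProduct.ext'
    intro x f
    funext n
    simp [e, psCoeffEquiv, swapLinearEquiv, Function.swap, LinearEquiv.piCongrRight, mul_comm]
    funext j
    exact mul_comm _ _
  rw [he]
  exact e.bijective

/-- If `M` is a finitely presented `A`-module, the canonical map
`M ⊗[A] A[[t]] → M[[t]]` is an isomorphism. -/
theorem powerSeriesTensorMap_bijective (A M : Type*) [CommRing A] [AddCommGroup M]
    [Module A M] [Module.FinitePresentation A M] :
    Function.Bijective (powerSeriesTensorMap A M) := by
  classical
  obtain ⟨n, π, hπ⟩ := Module.Finite.exists_fin' A M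
  have hK : (LinearMap.ker π).FG := Module.FinitePresentation.fg_ker π hπ
  obtain ⟨p, s, hs⟩ := Submodule.fg_iff_exists_fin_generating_family.mp hK
  let σ : (Fin p → A) →ₗ[A] (Fin n → A) := Fintype.linearCombination A s
  have hσ : LinearMap.range σ = LinearMap.ker π := by
    rw [Fintype.range_linearCombination, hs]
  constructor
  · rw [injective_iff_map_eq_zero]
    intro x hx
    obtain ⟨y, rfl⟩ := LinearMap.rTensor_surjective (PowerSeries A) hπ x
    have h1 : ∀ i, powerSeriesTensorMap A (Fin n → A) y i ∈ LinearMap.ker π := by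
      intro i
      have := congrFun (powerSeriesTensorMap_naturality π y) i
      rw [hx] at this
      exact (this.symm : _)
    choose H hH using fun i => (hσ ▸ h1 i : _ ∈ LinearMap.range σ)
    obtain ⟨z, hz⟩ := (powerSeriesTensorMap_bijective_free A p).2 H
    have h2 : σ.rTensor (PowerSeries A) z = y := by
      apply (powerSeriesTensorMap_bijective_free A n).1
      rw [powerSeriesTensorMap_naturality σ z, hz]
      funext i
      exact hH i
    rw [← h2, ← LinearMap.rTensor_comp_apply]
    have h3 : π ∘ₗ σ = 0 := by
      apply LinearMap.ext
      intro w
      have : σ w ∈ LinearMap.ker π := hσ ▸ LinearMap.mem_range_self σ w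
      simpa using this
    rw [h3, LinearMap.rTensor_zero, LinearMap.zero_apply]
  · intro F
    choose g hg using hπ
    obtain ⟨x, hx⟩ := (powerSeriesTensorMap_bijective_free A n).2 fun i => g (F i)
    refine ⟨π.rTensor (PowerSeries A) x, ?_⟩
    rw [powerSeriesTensorMap_naturality π x]
    funext i
    rw [hx]
    exact hg (F i)
end

section
/- Let R be a commutative ring, f = t − r₁ and g = ∏_{i=2}^{l}(t − r_i) in R[t], with r_i − r_j invertible in R for i ≠ j. Then the f-adic completion of R[t, g^{-1}] is isomorphic as an R[t, g^{-1}]-algebra to R[[s]] (via s ↦ t − r₁), i.e., to the power series ring over R. -/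
open Polynomial
set_option maxHeartbeats 1000000
set_option synthInstance.maxHeartbeats 400000

namespace AdicPSAux

open AdicCompletion

variable {R : Type*} [CommRing R]

noncomputable section

variable (r₁ : R) (g : R[X])

/-- The ideal `(X^n)` in `R[X]`. -/
def Jn (n : ℕ) : Ideal R[X] := Ideal.span {(X : R[X]) ^ n}

theorem mk_eq_of_coeff_eq {n : ℕ} {p q : R[X]} (h : ∀ k < n, p.coeff k = q.coeff k) :
    Ideal.Quotient.mk (Jn (R := R) n) p = Ideal.Quotient.mk (Jn n) q := by
  rw [Ideal.Quotient.eq, Jn, Ideal.mem_span_singleton]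
  exact X_pow_dvd_iff.mpr fun d hd => by simp [coeff_sub, h d hd]

/-- `f = X - r₁` as element of `B = R[X][1/g]`. -/
def fB : Localization.Away g := algebraMap R[X] (Localization.Away g) (X - C r₁)

/-- The ideal `(f)` of `B`. -/
def IB : Ideal (Localization.Away g) := Ideal.span {fB r₁ g}

theorem smul_top_eq (n : ℕ) :
    (IB r₁ g ^ n • ⊤ : Ideal (Localization.Away g)) = Ideal.span {fB r₁ g ^ n} := by
  rw [smul_eq_mul, Ideal.mul_top, IB, Ideal.span_singleton_pow]

/-- `R[X] → B/(fⁿ)`, substituting `X ↦ X - r₁`. -/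
def alphaHom (n : ℕ) :
    R[X] →+* Localization.Away g ⧸ (IB r₁ g ^ n • ⊤ : Ideal (Localization.Away g)) :=
  ((Ideal.Quotient.mk _).comp (algebraMap R[X] (Localization.Away g))).comp
    (aeval (X - C r₁) : R[X] →ₐ[R] R[X]).toRingHom

theorem alphaHom_apply (n : ℕ) (p : R[X]) :
    alphaHom r₁ g n p =
      Ideal.Quotient.mk _ (algebraMap R[X] (Localization.Away g) (aeval (X - C r₁) p)) := rfl

theorem alphaHom_vanish (n : ℕ) : ∀ p ∈ Jn (R := R) n, alphaHom r₁ g n p = 0 := by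
  intro p hp
  rw [Jn, Ideal.mem_span_singleton] at hp
  obtain ⟨c, rfl⟩ := hp
  rw [map_mul]
  have hXn : alphaHom r₁ g n (X ^ n) = 0 := by
    have hx : alphaHom r₁ g n X = Ideal.Quotient.mk _ (fB r₁ g) := by
      rw [alphaHom_apply, aeval_X, fB]
    rw [map_pow, hx, ← map_pow, Ideal.Quotient.eq_zero_iff_mem, smul_top_eq]
    exact Ideal.subset_span rfl
  rw [hXn, zero_mul]

/-- `R[X]/(Xⁿ) → B/(fⁿ)`. -/
def betaQ (n : ℕ) :
    R[X] ⧸ Jn (R := R) n →+*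
      Localization.Away g ⧸ (IB r₁ g ^ n • ⊤ : Ideal (Localization.Away g)) :=
  Ideal.Quotient.lift _ (alphaHom r₁ g n) (alphaHom_vanish r₁ g n)

theorem betaQ_mk (n : ℕ) (p : R[X]) :
    betaQ r₁ g n (Ideal.Quotient.mk _ p) = alphaHom r₁ g n p :=
  Ideal.Quotient.lift_mk _ _ _

theorem betaQ_transition {m n : ℕ} (hmn : m ≤ n) (q : R[X]) :
    transitionMap (IB r₁ g) (Localization.Away g) hmn (betaQ r₁ g n (Ideal.Quotient.mk _ q)) =
      betaQ r₁ g m (Ideal.Quotient.mk _ q) := by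
  rw [betaQ_mk, alphaHom_apply, betaQ_mk, alphaHom_apply, transitionMap_ideal_mk]

/-- `R[X] → R[X]/(Xⁿ)`, substituting `X ↦ X + r₁`. -/
def deltaHom (n : ℕ) : R[X] →+* R[X] ⧸ Jn (R := R) n :=
  (Ideal.Quotient.mk _).comp (aeval (X + C r₁) : R[X] →ₐ[R] R[X]).toRingHom

theorem deltaHom_apply (n : ℕ) (p : R[X]) :
    deltaHom r₁ n p = Ideal.Quotient.mk _ (aeval (X + C r₁) p) := rfl

theorem mkJn_isUnit {n : ℕ} {p : R[X]} (hp : IsUnit (p.coeff 0)) :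
    IsUnit (Ideal.Quotient.mk (Jn (R := R) n) p) := by
  have h1 : IsUnit (Ideal.Quotient.mk (Jn (R := R) n) (C (p.coeff 0))) :=
    hp.map ((Ideal.Quotient.mk (Jn (R := R) n)).comp (Polynomial.C : R →+* R[X]))
  have h2 : IsNilpotent (Ideal.Quotient.mk (Jn (R := R) n) (p - C (p.coeff 0))) := by
    obtain ⟨q, hq⟩ : (X : R[X]) ∣ (p - C (p.coeff 0)) := X_dvd_iff.mpr (by simp)
    refine ⟨n, ?_⟩
    rw [← map_pow, hq, mul_pow, Ideal.Quotient.eq_zero_iff_mem, Jn]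
    exact Ideal.mul_mem_right _ _ (Ideal.subset_span rfl)
  have h3 := h2.isUnit_add_left_of_commute h1 (Commute.all _ _)
  have h4 : C (p.coeff 0) + (p - C (p.coeff 0)) = p := by ring
  rwa [← map_add, h4] at h3

theorem aeval_comp_eq (c : R) (p : R[X]) : aeval (X + C c) p = p.comp (X + C c) := by
  rw [aeval_def, algebraMap_eq]
  rfl

theorem deltaHom_g_isUnit (hu : IsUnit (eval r₁ g)) (n : ℕ) :
    IsUnit (deltaHom r₁ n g) := by
  rw [deltaHom_apply]
  apply mkJn_isUnit
  have : (aeval (X + C r₁) g : R[X]).coeff 0 = eval r₁ g := by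
    rw [coeff_zero_eq_eval_zero, aeval_comp_eq, eval_comp]
    simp
  rwa [this]

/-- `B → R[X]/(Xⁿ)` via localization universal property. -/
def gammaB (hu : IsUnit (eval r₁ g)) (n : ℕ) :
    Localization.Away g →+* R[X] ⧸ Jn (R := R) n :=
  IsLocalization.Away.lift g (deltaHom_g_isUnit r₁ g hu n)

theorem gammaB_algebraMap (hu : IsUnit (eval r₁ g)) (n : ℕ) (p : R[X]) :
    gammaB r₁ g hu n (algebraMap R[X] (Localization.Away g) p) = deltaHom r₁ n p :=
  IsLocalization.Away.lift_eq g _ p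

theorem aeval_add_sub (p : R[X]) : aeval (X + C r₁) (aeval (X - C r₁) p) = p := by
  have h : ((aeval (X + C r₁) : R[X] →ₐ[R] R[X]).comp (aeval (X - C r₁))) =
      AlgHom.id R R[X] := by
    apply Polynomial.algHom_ext
    simp [algebraMap_eq]
  exact DFunLike.congr_fun h p

theorem aeval_sub_add (p : R[X]) : aeval (X - C r₁) (aeval (X + C r₁) p) = p := by
  have h : ((aeval (X - C r₁) : R[X] →ₐ[R] R[X]).comp (aeval (X + C r₁))) =
      AlgHom.id R R[X] := by
    apply Polynomial.algHom_ext
    simp [algebraMap_eq]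
  exact DFunLike.congr_fun h p

theorem gammaB_vanish (hu : IsUnit (eval r₁ g)) (n : ℕ) :
    ∀ b ∈ (IB r₁ g ^ n • ⊤ : Ideal (Localization.Away g)), gammaB r₁ g hu n b = 0 := by
  intro b hb
  rw [smul_top_eq, Ideal.mem_span_singleton] at hb
  obtain ⟨c, rfl⟩ := hb
  have hf : gammaB r₁ g hu n (fB r₁ g) = Ideal.Quotient.mk _ X := by
    rw [fB, gammaB_algebraMap, deltaHom_apply]
    congr 1
    simp [algebraMap_eq]
  rw [map_mul, map_pow, hf, ← map_pow, Ideal.Quotient.eq_zero_iff_mem.mpr, zero_mul]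
  exact Ideal.subset_span rfl

/-- `B/(fⁿ) → R[X]/(Xⁿ)`. -/
def gammaQ (hu : IsUnit (eval r₁ g)) (n : ℕ) :
    Localization.Away g ⧸ (IB r₁ g ^ n • ⊤ : Ideal (Localization.Away g)) →+*
      R[X] ⧸ Jn (R := R) n :=
  Ideal.Quotient.lift _ (gammaB r₁ g hu n) (gammaB_vanish r₁ g hu n)

theorem gammaQ_betaQ (hu : IsUnit (eval r₁ g)) (n : ℕ)
    (x : R[X] ⧸ Jn (R := R) n) : gammaQ r₁ g hu n (betaQ r₁ g n x) = x := by
  obtain ⟨p, rfl⟩ := Ideal.Quotient.mk_surjective x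
  rw [betaQ_mk, alphaHom_apply, gammaQ, Ideal.Quotient.lift_mk, gammaB_algebraMap,
    deltaHom_apply, aeval_add_sub]

theorem betaQ_injective (hu : IsUnit (eval r₁ g)) (n : ℕ) :
    Function.Injective (betaQ r₁ g n) :=
  Function.LeftInverse.injective (gammaQ_betaQ r₁ g hu n)

theorem betaQ_gammaQ (hu : IsUnit (eval r₁ g)) (n : ℕ)
    (y : Localization.Away g ⧸ (IB r₁ g ^ n • ⊤ : Ideal (Localization.Away g))) :
    betaQ r₁ g n (gammaQ r₁ g hu n y) = y := by
  obtain ⟨b, rfl⟩ := Ideal.Quotient.mk_surjective y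
  rw [gammaQ, Ideal.Quotient.lift_mk]
  have h : (betaQ r₁ g n).comp (gammaB r₁ g hu n) = Ideal.Quotient.mk _ := by
    apply IsLocalization.ringHom_ext (Submonoid.powers g)
    refine RingHom.ext fun p => ?_
    simp only [RingHom.coe_comp, Function.comp_apply, gammaB_algebraMap, deltaHom_apply,
      betaQ_mk, alphaHom_apply, aeval_sub_add]
  exact DFunLike.congr_fun h b

/-- The map `R[[X]] → AdicCompletion (f) B` (underlying function). -/
def PsiFun (p : PowerSeries R) : AdicCompletion (IB r₁ g) (Localization.Away g) :=
  ⟨fun n => betaQ r₁ g n (Ideal.Quotient.mk _ (p.trunc n)), by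
    intro m n hmn
    rw [betaQ_transition]
    exact congrArg _ (mk_eq_of_coeff_eq fun k hk => by
      rw [PowerSeries.coeff_trunc, PowerSeries.coeff_trunc, if_pos (lt_of_lt_of_le hk hmn),
        if_pos hk])⟩

theorem PsiFun_val (p : PowerSeries R) (n : ℕ) :
    (PsiFun r₁ g p).val n = betaQ r₁ g n (Ideal.Quotient.mk _ (p.trunc n)) := rfl

/-- The map `R[[X]] → AdicCompletion (f) B` as ring hom. -/
def Psi : PowerSeries R →+* AdicCompletion (IB r₁ g) (Localization.Away g) where
  toFun := PsiFun r₁ g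
  map_one' := AdicCompletion.ext fun n => by
    show betaQ r₁ g n (Ideal.Quotient.mk _ (PowerSeries.trunc n 1)) = 1
    have h : Ideal.Quotient.mk (Jn (R := R) n) (PowerSeries.trunc n 1) =
        Ideal.Quotient.mk _ 1 :=
      mk_eq_of_coeff_eq fun k hk => by
        rw [PowerSeries.coeff_trunc, if_pos hk]
        simp [PowerSeries.coeff_one, Polynomial.coeff_one]
    rw [h, _root_.map_one (Ideal.Quotient.mk (Jn (R := R) n)), _root_.map_one (betaQ r₁ g n)]
  map_mul' p q := AdicCompletion.ext fun n => by
    show betaQ r₁ g n (Ideal.Quotient.mk _ ((p * q).trunc n)) =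
      betaQ r₁ g n (Ideal.Quotient.mk _ (p.trunc n)) *
        betaQ r₁ g n (Ideal.Quotient.mk _ (q.trunc n))
    rw [← _root_.map_mul (betaQ r₁ g n), ← _root_.map_mul (Ideal.Quotient.mk (Jn (R := R) n))]
    exact congrArg _ (mk_eq_of_coeff_eq fun k hk => by
      rw [PowerSeries.coeff_trunc, if_pos hk,
        PowerSeries.coeff_mul_eq_coeff_trunc_mul_trunc p q hk, ← Polynomial.coe_mul,
        Polynomial.coeff_coe])
  map_zero' := AdicCompletion.ext fun n => by
    show betaQ r₁ g n (Ideal.Quotient.mk _ (PowerSeries.trunc n 0)) = 0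
    rw [_root_.map_zero (PowerSeries.trunc (R := R) n), _root_.map_zero (Ideal.Quotient.mk (Jn (R := R) n)), _root_.map_zero (betaQ r₁ g n)]
  map_add' p q := AdicCompletion.ext fun n => by
    show betaQ r₁ g n (Ideal.Quotient.mk _ ((p + q).trunc n)) =
      betaQ r₁ g n (Ideal.Quotient.mk _ (p.trunc n)) +
        betaQ r₁ g n (Ideal.Quotient.mk _ (q.trunc n))
    rw [_root_.map_add (PowerSeries.trunc (R := R) n), _root_.map_add (Ideal.Quotient.mk (Jn (R := R) n)), _root_.map_add (betaQ r₁ g n)]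

theorem Psi_apply (p : PowerSeries R) : Psi r₁ g p = PsiFun r₁ g p := rfl

theorem Psi_injective (hu : IsUnit (eval r₁ g)) : Function.Injective (Psi r₁ g) := by
  rw [injective_iff_map_eq_zero]
  intro p hp
  ext k
  have h1 : (PsiFun r₁ g p).val (k + 1) =
      (0 : AdicCompletion (IB r₁ g) (Localization.Away g)).val (k + 1) := by
    rw [← Psi_apply, hp]
  rw [PsiFun_val, AdicCompletion.val_zero] at h1
  have h2 : Ideal.Quotient.mk (Jn (R := R) (k + 1)) (p.trunc (k + 1)) = 0 := by
    apply betaQ_injective r₁ g hu (k + 1)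
    rw [h1, Pi.zero_apply, _root_.map_zero (betaQ r₁ g (k+1))]
  rw [Ideal.Quotient.eq_zero_iff_mem, Jn, Ideal.mem_span_singleton] at h2
  have h3 := X_pow_dvd_iff.mp h2 k (Nat.lt_succ_self k)
  rw [PowerSeries.coeff_trunc, if_pos (Nat.lt_succ_self k)] at h3
  simpa using h3

theorem Psi_surjective (hu : IsUnit (eval r₁ g)) : Function.Surjective (Psi r₁ g) := by
  intro x
  choose y hy using fun n => Ideal.Quotient.mk_surjective
    (I := Jn (R := R) n) (gammaQ r₁ g hu n (x.val n))
  have hbx : ∀ n, betaQ r₁ g n (Ideal.Quotient.mk _ (y n)) = x.val n := fun n => by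
    rw [hy, betaQ_gammaQ]
  refine ⟨PowerSeries.mk fun k => (y (k + 1)).coeff k, ?_⟩
  rw [Psi_apply]
  apply AdicCompletion.ext
  intro n
  rw [PsiFun_val, ← hbx n]
  congr 1
  apply mk_eq_of_coeff_eq
  intro k hk
  rw [PowerSeries.coeff_trunc, if_pos hk, PowerSeries.coeff_mk]
  -- (y (k+1)).coeff k = (y n).coeff k
  have hmn : k + 1 ≤ n := hk
  have h1 : betaQ r₁ g (k + 1) (Ideal.Quotient.mk _ (y n)) =
      betaQ r₁ g (k + 1) (Ideal.Quotient.mk _ (y (k + 1))) := by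
    rw [← betaQ_transition r₁ g hmn (y n), hbx n, hbx (k + 1), x.2 hmn]
  have h2 := betaQ_injective r₁ g hu (k + 1) h1
  rw [Ideal.Quotient.eq, Jn, Ideal.mem_span_singleton] at h2
  have h3 := X_pow_dvd_iff.mp h2 k (Nat.lt_succ_self k)
  rw [coeff_sub, sub_eq_zero] at h3
  exact h3.symm

theorem exists_equiv (hu : IsUnit (eval r₁ g)) :
    ∃ e : AdicCompletion (IB r₁ g) (Localization.Away g) ≃+* PowerSeries R,
      (∀ a : R, e (algebraMap (Localization.Away g)
          (AdicCompletion (IB r₁ g) (Localization.Away g))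
          (algebraMap R[X] (Localization.Away g) (C a))) = PowerSeries.C a) ∧
      e (algebraMap (Localization.Away g) (AdicCompletion (IB r₁ g) (Localization.Away g))
          (algebraMap R[X] (Localization.Away g) X)) =
        PowerSeries.X + PowerSeries.C r₁ := by
  have hval : ∀ (b : Localization.Away g) (n : ℕ),
      (algebraMap (Localization.Away g)
        (AdicCompletion (IB r₁ g) (Localization.Away g)) b).val n =
      Ideal.Quotient.mk _ b := fun b n => rfl
  let E := RingEquiv.ofBijective (Psi r₁ g) ⟨Psi_injective r₁ g hu, Psi_surjective r₁ g hu⟩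
  have hE : ∀ p, E p = Psi r₁ g p := fun p => rfl
  refine ⟨E.symm, fun a => ?_, ?_⟩
  · have hPC : Psi r₁ g (PowerSeries.C a) = algebraMap (Localization.Away g)
        (AdicCompletion (IB r₁ g) (Localization.Away g))
        (algebraMap R[X] (Localization.Away g) (C a)) := ?_
    · rw [← hPC, ← hE, RingEquiv.symm_apply_apply]
    apply AdicCompletion.ext
    intro n
    rw [Psi_apply, PsiFun_val, hval]
    have h1 : Ideal.Quotient.mk (Jn (R := R) n) ((PowerSeries.C a).trunc n) =
        Ideal.Quotient.mk _ (Polynomial.C a) :=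
      mk_eq_of_coeff_eq fun k hk => by
        rw [PowerSeries.coeff_trunc, if_pos hk]
        simp [PowerSeries.coeff_C, Polynomial.coeff_C]
    rw [h1, betaQ_mk, alphaHom_apply, aeval_C, ← algebraMap_eq]
  · have hPX : Psi r₁ g (PowerSeries.X + PowerSeries.C r₁) = algebraMap (Localization.Away g)
        (AdicCompletion (IB r₁ g) (Localization.Away g))
        (algebraMap R[X] (Localization.Away g) X) := ?_
    · rw [← hPX, ← hE, RingEquiv.symm_apply_apply]
    apply AdicCompletion.ext
    intro n
    rw [Psi_apply, PsiFun_val, hval]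
    have h1 : Ideal.Quotient.mk (Jn (R := R) n)
        ((PowerSeries.X + PowerSeries.C r₁).trunc n) =
        Ideal.Quotient.mk _ (Polynomial.X + Polynomial.C r₁) :=
      mk_eq_of_coeff_eq fun k hk => by
        rw [PowerSeries.coeff_trunc, if_pos hk]
        simp [PowerSeries.coeff_X, PowerSeries.coeff_C, Polynomial.coeff_X, Polynomial.coeff_C, eq_comm]
    rw [h1, betaQ_mk, alphaHom_apply]
    congr 2
    simp [algebraMap_eq]

end

end AdicPSAux

/-- Let `R` be a commutative ring, `r₁, …, r_l ∈ R` with `r_i − r_j` invertible for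
`i ≠ j`, `f = t − r₁`, `g = ∏_{i=2}^l (t − r_i)`. Then the `f`-adic completion of
`B = R[t, g⁻¹]` is isomorphic, as an `R`-algebra and compatibly with `B` (via
`s ↦ t − r₁`, i.e. the image of `t` is `s + r₁`), to the power series ring `R[[s]]`. -/
theorem adicCompletion_iso_powerSeries (R : Type*) [CommRing R]
    (l : ℕ) (hl : 0 < l) (r : Fin l → R)
    (hr : ∀ i j : Fin l, i ≠ j → IsUnit (r i - r j)) :
    let r₁ : R := r ⟨0, hl⟩
    let g : R[X] := ∏ i ∈ Finset.univ.erase ⟨0, hl⟩, (X - C (r i))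
    let B := Localization.Away g
    let f : B := algebraMap R[X] B (X - C r₁)
    ∃ e : AdicCompletion (Ideal.span {f}) B ≃+* PowerSeries R,
      (∀ a : R, e (algebraMap B (AdicCompletion (Ideal.span {f}) B)
          (algebraMap R[X] B (C a))) = PowerSeries.C a) ∧
      e (algebraMap B (AdicCompletion (Ideal.span {f}) B)
          (algebraMap R[X] B X)) = PowerSeries.X + PowerSeries.C r₁ := by
  intro r₁ g B f
  have hu : IsUnit (eval r₁ g) := by
    rw [eval_prod]
    apply Finset.prod_induction _ IsUnit (fun a b => IsUnit.mul) isUnit_one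
    intro i hi
    rw [eval_sub, eval_X, eval_C]
    exact hr _ _ (Finset.ne_of_mem_erase hi).symm
  exact AdicPSAux.exists_equiv r₁ g hu
end
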